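/- Let q ∈ (0,1) ∪ (1,2], let λ_k ≥ 0 with ∑_k λ_k = 1, and for each k let p^{(k)} be a probability vector in ℝ^d. Then (1/(1-q))·(1 − (∑_j (∑_k λ_k^q p^{(k)}_j)^{1/q})^q) ≤ ∑_k λ_k · (1/(1-q))·(1 − (∑_j (p^{(k)}_j)^{1/q})^q). That is, C_q^I evaluated on a mixture is at most the corresponding convex combination, so C_q^I(ρ) ≤ C_q^IV(ρ). -/

import Mathlib

open Finset

private lemma my_rpow_add_le_add_rpow {r a b : ℝ} (ha : 0 ≤ a) (hb : 0 ≤ b)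
    (hr0 : 0 ≤ r) (hr1 : r ≤ 1) : (a + b) ^ r ≤ a ^ r + b ^ r := by
  lift a to NNReal using ha
  lift b to NNReal using hb
  exact_mod_cast NNReal.rpow_add_le_add_rpow a b hr0 hr1

private lemma my_add_rpow_le_rpow_add {r a b : ℝ} (ha : 0 ≤ a) (hb : 0 ≤ b)
    (hr : 1 ≤ r) : a ^ r + b ^ r ≤ (a + b) ^ r := by
  lift a to NNReal using ha
  lift b to NNReal using hb
  exact_mod_cast NNReal.add_rpow_le_rpow_add a b hr

private lemma my_rpow_sum_le_sum_rpow {ι : Type*} (s : Finset ι) (a : ι → ℝ) {r : ℝ}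
    (hr0 : 0 < r) (hr1 : r ≤ 1) (ha : ∀ i ∈ s, 0 ≤ a i) :
    (∑ i ∈ s, a i) ^ r ≤ ∑ i ∈ s, a i ^ r := by
  induction s using Finset.cons_induction with
  | empty => simp [Real.zero_rpow hr0.ne']
  | cons i s hi ih =>
    rw [Finset.sum_cons, Finset.sum_cons]
    have hs : 0 ≤ ∑ j ∈ s, a j :=
      Finset.sum_nonneg fun j hj => ha j (Finset.mem_cons_of_mem hj)
    calc (a i + ∑ j ∈ s, a j) ^ r ≤ a i ^ r + (∑ j ∈ s, a j) ^ r :=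
          my_rpow_add_le_add_rpow (ha i (Finset.mem_cons_self i s)) hs hr0.le hr1
      _ ≤ a i ^ r + ∑ j ∈ s, a j ^ r :=
          add_le_add_right (ih fun j hj => ha j (Finset.mem_cons_of_mem hj)) _

private lemma my_sum_rpow_le_rpow_sum {ι : Type*} (s : Finset ι) (a : ι → ℝ) {r : ℝ}
    (hr : 1 ≤ r) (ha : ∀ i ∈ s, 0 ≤ a i) :
    ∑ i ∈ s, a i ^ r ≤ (∑ i ∈ s, a i) ^ r := by
  induction s using Finset.cons_induction with
  | empty => simp [Real.zero_rpow (by positivity : r ≠ 0)]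
  | cons i s hi ih =>
    rw [Finset.sum_cons, Finset.sum_cons]
    have hs : 0 ≤ ∑ j ∈ s, a j :=
      Finset.sum_nonneg fun j hj => ha j (Finset.mem_cons_of_mem hj)
    calc a i ^ r + ∑ j ∈ s, a j ^ r ≤ a i ^ r + (∑ j ∈ s, a j) ^ r :=
          add_le_add_right (ih fun j hj => ha j (Finset.mem_cons_of_mem hj)) _
      _ ≤ (a i + ∑ j ∈ s, a j) ^ r :=
          my_add_rpow_le_rpow_add (ha i (Finset.mem_cons_self i s)) hs hr

/-- concave Jensen for rpow with 0 < q < 1 -/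
private lemma my_arith_mean_rpow {ι : Type*} (s : Finset ι) (w t : ι → ℝ)
    (hw : ∀ i ∈ s, 0 ≤ w i) (hw' : ∑ i ∈ s, w i = 1) (ht : ∀ i ∈ s, 0 ≤ t i)
    {q : ℝ} (hq0 : 0 < q) (hq1 : q < 1) :
    ∑ i ∈ s, w i * t i ^ q ≤ (∑ i ∈ s, w i * t i) ^ q := by
  have hp : 1 ≤ 1 / q := by rw [le_div_iff₀ hq0]; linarith
  have h := Real.arith_mean_le_rpow_mean s w (fun i => t i ^ q) hw hw'
    (fun i hi => Real.rpow_nonneg (ht i hi) q) hp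
  have h1 : ∀ i ∈ s, w i * (t i ^ q) ^ (1 / q) = w i * t i := by
    intro i hi
    rw [one_div, Real.rpow_rpow_inv (ht i hi) hq0.ne']
  rw [Finset.sum_congr rfl h1] at h
  have h2 : (1 : ℝ) / (1 / q) = q := by field_simp
  rwa [h2] at h

/-- C_q^I on a mixture is at most the convex combination of C_q^I on the components:
C_q^I(ρ) ≤ C_q^IV(ρ), for q ∈ (0,1) ∪ (1,2]. -/
theorem tsallis_coherenceI_le_coherenceIV (d m : ℕ) (q : ℝ)
    (hq : (0 < q ∧ q < 1) ∨ (1 < q ∧ q ≤ 2))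
    (lam : Fin m → ℝ) (hl : ∀ k, 0 ≤ lam k) (hls : ∑ k, lam k = 1)
    (p : Fin m → Fin d → ℝ) (hp : ∀ k j, 0 ≤ p k j) (hps : ∀ k, ∑ j, p k j = 1) :
    (1 / (1 - q)) * (1 - (∑ j, (∑ k, (lam k) ^ q * p k j) ^ (1 / q)) ^ q)
      ≤ ∑ k, lam k * ((1 / (1 - q)) * (1 - (∑ j, (p k j) ^ (1 / q)) ^ q)) := by
  have hq0 : 0 < q := by rcases hq with ⟨h, _⟩ | ⟨h, _⟩ <;> linarith
  set c : ℝ := 1 / (1 - q) with hc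
  set T : Fin m → ℝ := fun k => ∑ j, (p k j) ^ (1 / q) with hT
  set S : ℝ := ∑ j, (∑ k, (lam k) ^ q * p k j) ^ (1 / q) with hS
  have hTnn : ∀ k, 0 ≤ T k := fun k =>
    Finset.sum_nonneg fun j _ => Real.rpow_nonneg (hp k j) _
  have hSnn : 0 ≤ S :=
    Finset.sum_nonneg fun j _ => Real.rpow_nonneg
      (Finset.sum_nonneg fun k _ => mul_nonneg (Real.rpow_nonneg (hl k) q) (hp k j)) _
  have hWnn : 0 ≤ ∑ k, lam k * T k :=
    Finset.sum_nonneg fun k _ => mul_nonneg (hl k) (hTnn k)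
  -- rewrite RHS
  have hRHS : ∑ k, lam k * (c * (1 - T k ^ q)) = c * (1 - ∑ k, lam k * T k ^ q) := by
    have h1 : ∀ k ∈ Finset.univ, lam k * (c * (1 - T k ^ q))
        = c * lam k - c * (lam k * T k ^ q) := fun k _ => by ring
    rw [Finset.sum_congr rfl h1, Finset.sum_sub_distrib, ← Finset.mul_sum,
      ← Finset.mul_sum, hls, mul_one]
    ring
  rw [hRHS]
  -- pointwise identity: (lam k ^ q * p k j) ^ (1/q) = lam k * (p k j) ^ (1/q)
  have hpw : ∀ k j, ((lam k) ^ q * p k j) ^ (1 / q) = lam k * (p k j) ^ (1 / q) := by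
    intro k j
    rw [Real.mul_rpow (Real.rpow_nonneg (hl k) q) (hp k j), ← Real.rpow_mul (hl k),
      mul_one_div_cancel hq0.ne', Real.rpow_one]
  have hswap : ∑ j, ∑ k, lam k * (p k j) ^ (1 / q) = ∑ k, lam k * T k := by
    rw [Finset.sum_comm]
    exact Finset.sum_congr rfl fun k _ => by rw [hT, Finset.mul_sum]
  rcases hq with ⟨hq0', hq1⟩ | ⟨hq1, hq2⟩
  · -- 0 < q < 1 : c > 0, superadditivity (1/q ≥ 1), concavity
    have hr : (1:ℝ) ≤ 1 / q := by rw [le_div_iff₀ hq0]; linarith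
    have hSge : ∑ k, lam k * T k ≤ S := by
      rw [← hswap, hS]
      apply Finset.sum_le_sum
      intro j _
      calc ∑ k, lam k * (p k j) ^ (1 / q)
          = ∑ k, ((lam k) ^ q * p k j) ^ (1 / q) :=
            Finset.sum_congr rfl fun k _ => (hpw k j).symm
        _ ≤ (∑ k, (lam k) ^ q * p k j) ^ (1 / q) :=
            my_sum_rpow_le_rpow_sum _ _ hr fun k _ =>
              mul_nonneg (Real.rpow_nonneg (hl k) q) (hp k j)
    have hW : ∑ k, lam k * T k ^ q ≤ S ^ q :=
      (my_arith_mean_rpow univ lam T (fun k _ => hl k) hls (fun k _ => hTnn k)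
        hq0 hq1).trans (Real.rpow_le_rpow hWnn hSge hq0.le)
    have hcpos : 0 ≤ c := by
      rw [hc]
      apply div_nonneg zero_le_one
      linarith
    exact mul_le_mul_of_nonneg_left (by linarith) hcpos
  · -- 1 < q ≤ 2 : c < 0, subadditivity (1/q ≤ 1), convexity
    have hr1 : 1 / q ≤ 1 := by rw [div_le_one hq0]; linarith
    have hSle : S ≤ ∑ k, lam k * T k := by
      rw [← hswap, hS]
      apply Finset.sum_le_sum
      intro j _
      calc (∑ k, (lam k) ^ q * p k j) ^ (1 / q)
          ≤ ∑ k, ((lam k) ^ q * p k j) ^ (1 / q) :=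
            my_rpow_sum_le_sum_rpow _ _ (div_pos one_pos hq0) hr1 fun k _ =>
              mul_nonneg (Real.rpow_nonneg (hl k) q) (hp k j)
        _ = ∑ k, lam k * (p k j) ^ (1 / q) :=
            Finset.sum_congr rfl fun k _ => hpw k j
    have hW : S ^ q ≤ ∑ k, lam k * T k ^ q :=
      (Real.rpow_le_rpow hSnn hSle hq0.le).trans
        (Real.rpow_arith_mean_le_arith_mean_rpow univ lam T (fun k _ => hl k) hls
          (fun k _ => hTnn k) hq1.le)
    have hcneg : c ≤ 0 := by
      rw [hc]
      apply div_nonpos_of_nonneg_of_nonpos <;> linarith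
    exact mul_le_mul_of_nonpos_left (by linarith) hcneg
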